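/- Let φ(s) = log(∑_{i=0}^n e^{a_i s + b_i}) for fixed reals a_0,…,a_n, b_0,…,b_n. Then φ''(s) ≥ 0 for all s, and |φ'''(s)| ≤ 3√2 · (max_{0≤i≤n} |a_i|) · φ''(s) for all s ∈ ℝ. -/

import Mathlib

theorem stmt_1 (n : ℕ) (a b : Fin (n + 1) → ℝ) (φ : ℝ → ℝ)
    (hφ : ∀ s, φ s = Real.log (∑ i, Real.exp (a i * s + b i))) (s : ℝ) :
    0 ≤ iteratedDeriv 2 φ s ∧
    |iteratedDeriv 3 φ s| ≤
      3 * Real.sqrt 2 * (Finset.univ.sup' Finset.univ_nonempty fun i => |a i|) *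
        iteratedDeriv 2 φ s := by
  classical
  set M : ℝ := Finset.univ.sup' Finset.univ_nonempty fun i => |a i| with hMdef
  set f : ℕ → ℝ → ℝ := fun k t => ∑ i, (a i) ^ k * Real.exp (a i * t + b i) with hfdef
  have hpos : ∀ t, 0 < f 0 t := by
    intro t
    apply Finset.sum_pos _ Finset.univ_nonempty
    intro i _
    simpa using Real.exp_pos (a i * t + b i)
  have hfd : ∀ k t, HasDerivAt (f k) (f (k + 1) t) t := by
    intro k t
    have h : HasDerivAt (fun t => ∑ i, (a i) ^ k * Real.exp (a i * t + b i))
        (∑ i, (a i) ^ k * (Real.exp (a i * t + b i) * a i)) t := by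
      apply HasDerivAt.fun_sum
      intro i _
      simpa using
        ((((hasDerivAt_id t).const_mul (a i)).add_const (b i)).exp.const_mul ((a i) ^ k))
    have heq : (∑ i, (a i) ^ k * (Real.exp (a i * t + b i) * a i)) = f (k + 1) t := by
      rw [hfdef]
      exact Finset.sum_congr rfl fun i _ => by ring
    rw [heq] at h
    rw [hfdef]
    exact h
  have hφeq : φ = fun t => Real.log (f 0 t) := by
    funext t
    rw [hφ t, hfdef]
    simp only [pow_zero, one_mul]
  have hd1 : ∀ t, HasDerivAt φ (f 1 t / f 0 t) t := by
    intro t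
    rw [hφeq]
    exact (hfd 0 t).log (hpos t).ne'
  have hd2 : ∀ t, HasDerivAt (fun u => f 1 u / f 0 u)
      ((f 2 t * f 0 t - f 1 t * f 1 t) / f 0 t ^ 2) t := fun t =>
    (hfd 1 t).div (hfd 0 t) (hpos t).ne'
  set G2 : ℝ := (f 2 s * f 0 s - f 1 s * f 1 s) / f 0 s ^ 2 with hG2def
  set G3 : ℝ := (f 3 s * f 0 s ^ 2 - 3 * f 2 s * f 1 s * f 0 s + 2 * f 1 s ^ 3) / f 0 s ^ 3
    with hG3def
  have hd3 : HasDerivAt (fun u => (f 2 u * f 0 u - f 1 u * f 1 u) / f 0 u ^ 2) G3 s := by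
    have hnum : HasDerivAt (fun u => f 2 u * f 0 u - f 1 u * f 1 u)
        (f 3 s * f 0 s + f 2 s * f 1 s - (f 2 s * f 1 s + f 1 s * f 2 s)) s :=
      ((hfd 2 s).mul (hfd 0 s)).sub ((hfd 1 s).mul (hfd 1 s))
    have hden := (hfd 0 s).fun_pow 2
    have h := hnum.fun_div hden (by have := hpos s; positivity)
    refine h.congr_deriv ?_
    rw [hG3def]
    have gen : ∀ w y z u : ℝ, w ≠ 0 →
        (u * w ^ 2 - 3 * y * z * w + 2 * z ^ 3) / w ^ 3
          = ((u * w + y * z - (y * z + z * y)) * w ^ 2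
              - (y * w - z * z) * ((2 : ℕ) * w ^ 1 * z)) / (w ^ 2) ^ 2 := by
      intro w y z u hw
      push_cast
      field_simp
      ring
    exact (gen (f 0 s) (f 2 s) (f 1 s) (f 3 s) (hpos s).ne').symm
  have e1 : deriv φ = fun t => f 1 t / f 0 t := funext fun t => (hd1 t).deriv
  have e2 : deriv (fun t => f 1 t / f 0 t)
      = fun t => (f 2 t * f 0 t - f 1 t * f 1 t) / f 0 t ^ 2 :=
    funext fun t => (hd2 t).deriv
  have h2f : iteratedDeriv 2 φ = fun t => (f 2 t * f 0 t - f 1 t * f 1 t) / f 0 t ^ 2 := by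
    rw [show (2 : ℕ) = 1 + 1 from rfl, iteratedDeriv_succ, iteratedDeriv_one, e1, e2]
  have h2 : iteratedDeriv 2 φ s = G2 := by rw [h2f]
  have h3 : iteratedDeriv 3 φ s = G3 := by
    rw [show (3 : ℕ) = 2 + 1 from rfl, iteratedDeriv_succ, h2f]
    exact hd3.deriv
  -- probability weights
  have hSpos : 0 < f 0 s := hpos s
  set p : Fin (n + 1) → ℝ := fun i => Real.exp (a i * s + b i) / f 0 s with hpdef
  have hppos : ∀ i, 0 < p i := fun i => by
    rw [hpdef]
    exact div_pos (Real.exp_pos _) hSpos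
  have hmk : ∀ k, ∑ i, p i * a i ^ k = f k s / f 0 s := by
    intro k
    rw [hfdef, Finset.sum_div]
    refine Finset.sum_congr rfl fun i _ => ?_
    rw [hpdef]
    ring
  have hp1 : ∑ i, p i = 1 := by
    have h0 := hmk 0
    simp only [pow_zero, mul_one] at h0
    rw [h0, div_self hSpos.ne']
  set μ : ℝ := f 1 s / f 0 s with hμdef
  have hpμ : ∑ i, p i * a i = μ := by
    have h1 := hmk 1
    simpa using h1
  have hA : G2 = ∑ i, p i * (a i - μ) ^ 2 := by
    have expand : ∀ i, p i * (a i - μ) ^ 2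
        = p i * a i ^ 2 - 2 * μ * (p i * a i) + μ ^ 2 * p i := fun i => by ring
    rw [Finset.sum_congr rfl fun i _ => expand i]
    rw [Finset.sum_add_distrib, Finset.sum_sub_distrib, ← Finset.mul_sum, ← Finset.mul_sum,
      hpμ, hp1, hmk 2, hG2def, hμdef]
    have gen : ∀ w y z : ℝ, w ≠ 0 →
        (y * w - z * z) / w ^ 2 = y / w - 2 * (z / w) * (z / w) + (z / w) ^ 2 * 1 := by
      intro w y z hw
      field_simp
      ring
    exact gen (f 0 s) (f 2 s) (f 1 s) hSpos.ne'
  have hB : G3 = ∑ i, p i * (a i - μ) ^ 3 := by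
    have expand : ∀ i, p i * (a i - μ) ^ 3
        = p i * a i ^ 3 - 3 * μ * (p i * a i ^ 2) + 3 * μ ^ 2 * (p i * a i) - μ ^ 3 * p i :=
      fun i => by ring
    rw [Finset.sum_congr rfl fun i _ => expand i]
    rw [Finset.sum_sub_distrib, Finset.sum_add_distrib, Finset.sum_sub_distrib,
      ← Finset.mul_sum, ← Finset.mul_sum, ← Finset.mul_sum, hpμ, hp1, hmk 2, hmk 3,
      hG3def, hμdef]
    have gen : ∀ w y z u : ℝ, w ≠ 0 →
        (u * w ^ 2 - 3 * y * z * w + 2 * z ^ 3) / w ^ 3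
          = u / w - 3 * (z / w) * (y / w) + 3 * (z / w) ^ 2 * (z / w) - (z / w) ^ 3 * 1 := by
      intro w y z u hw
      field_simp
      ring
    exact gen (f 0 s) (f 2 s) (f 1 s) (f 3 s) hSpos.ne'
  have hg2nonneg : 0 ≤ G2 := by
    rw [hA]
    exact Finset.sum_nonneg fun i _ => mul_nonneg (hppos i).le (sq_nonneg _)
  have hMa : ∀ i, |a i| ≤ M := by
    intro i
    rw [hMdef]
    exact Finset.le_sup' (fun j => |a j|) (Finset.mem_univ i)
  have hM0 : 0 ≤ M := le_trans (abs_nonneg (a 0)) (hMa 0)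
  have hμle : |μ| ≤ M := by
    rw [← hpμ]
    calc |∑ i, p i * a i| ≤ ∑ i, |p i * a i| := Finset.abs_sum_le_sum_abs _ _
      _ ≤ ∑ i, p i * M := by
          apply Finset.sum_le_sum
          intro i _
          rw [abs_mul, abs_of_pos (hppos i)]
          exact mul_le_mul_of_nonneg_left (hMa i) (hppos i).le
      _ = M := by rw [← Finset.sum_mul, hp1, one_mul]
  have key : |G3| ≤ 2 * M * G2 := by
    rw [hA, hB]
    calc |∑ i, p i * (a i - μ) ^ 3| ≤ ∑ i, |p i * (a i - μ) ^ 3| :=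
          Finset.abs_sum_le_sum_abs _ _
      _ ≤ ∑ i, 2 * M * (p i * (a i - μ) ^ 2) := by
          apply Finset.sum_le_sum
          intro i _
          have h1 : |a i - μ| ≤ 2 * M := by
            calc |a i - μ| ≤ |a i| + |μ| := abs_sub _ _
              _ ≤ M + M := add_le_add (hMa i) hμle
              _ = 2 * M := by ring
          have habs : |p i * (a i - μ) ^ 3| = p i * (|a i - μ| * (a i - μ) ^ 2) := by
            rw [abs_mul, abs_of_pos (hppos i), abs_pow]
            congr 1
            rw [pow_succ, sq_abs]
            ring
          rw [habs]
          have h2' : |a i - μ| * (a i - μ) ^ 2 ≤ 2 * M * (a i - μ) ^ 2 :=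
            mul_le_mul_of_nonneg_right h1 (sq_nonneg _)
          calc p i * (|a i - μ| * (a i - μ) ^ 2) ≤ p i * (2 * M * (a i - μ) ^ 2) :=
                mul_le_mul_of_nonneg_left h2' (hppos i).le
            _ = 2 * M * (p i * (a i - μ) ^ 2) := by ring
      _ = 2 * M * ∑ i, p i * (a i - μ) ^ 2 := by rw [← Finset.mul_sum]
  constructor
  · rw [h2]; exact hg2nonneg
  · rw [h2, h3]
    refine key.trans ?_
    have h2le : (2 : ℝ) ≤ 3 * Real.sqrt 2 := by
      nlinarith [Real.sq_sqrt (show (0:ℝ) ≤ 2 by norm_num), Real.sqrt_nonneg 2]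
    exact mul_le_mul_of_nonneg_right
      (mul_le_mul_of_nonneg_right h2le hM0) hg2nonneg
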